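/- Let A be a C*-algebra and L : A_sa → [0,∞] an extended seminorm on A_sa, and suppose there is an approximate identity (I_n) for A with L(I_n) → 0. Let φ be a state on A and let ψ be a positive continuous linear functional on A with ‖ψ‖ < 1 (such ψ are exactly the restrictions to A of states on the multiplier algebra M(A) that are not strictly continuous). Then d_L(φ, ψ) = ∞. -/

import Mathlib

open Filter Topology
open scoped ComplexOrder ENNReal NNReal MultiplierAlgebra

noncomputable section

/-- A *state* on a C⋆-algebra: a continuous linear functional into `ℂ` that is nonnegative
on nonnegative elements and has norm `1`. -/
def IsState {E : Type*} [NormedAddCommGroup E] [NormedSpace ℂ E] [PartialOrder E]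
    (φ : E →L[ℂ] ℂ) : Prop :=
  (∀ a : E, 0 ≤ a → 0 ≤ φ a) ∧ ‖φ‖ = 1

variable {A : Type*} [NonUnitalCStarAlgebra A] [PartialOrder A] [StarOrderedRing A]

/-- `L` is an extended seminorm on the self-adjoint part `A_sa` of `A`:
`L (t • b) = |t| * L b` for real `t`, and `L (b + b') ≤ L b + L b'`. -/
def IsESeminorm (L : selfAdjoint A → ℝ≥0∞) : Prop :=
  (∀ (t : ℝ) (b : selfAdjoint A), L (t • b) = (‖t‖₊ : ℝ≥0∞) * L b) ∧
    ∀ b b' : selfAdjoint A, L (b + b') ≤ L b + L b'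

/-- The spectral distance `d_L(φ, ψ) = sup { |φ b - ψ b| : b ∈ A_sa, L b ≤ 1 }`,
valued in `[0, ∞]`. -/
def dL (L : selfAdjoint A → ℝ≥0∞) (φ ψ : A → ℂ) : ℝ≥0∞ :=
  ⨆ b : {b : selfAdjoint A // L b ≤ 1}, (‖φ (b.1 : A) - ψ (b.1 : A)‖₊ : ℝ≥0∞)

/-- An approximate identity for `A`: a net `(I n)` with `0 ≤ I n`, `‖I n‖ ≤ 1`, and
`‖I n * a - a‖ → 0`, `‖a * I n - a‖ → 0` for every `a : A`. -/
def IsApproxUnit {ι : Type*} [Preorder ι] (I : ι → A) : Prop :=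
  (∀ n, 0 ≤ I n) ∧ (∀ n, ‖I n‖ ≤ 1) ∧
    ∀ a : A, Tendsto (fun n => ‖I n * a - a‖) atTop (𝓝 0) ∧
      Tendsto (fun n => ‖a * I n - a‖) atTop (𝓝 0)

open scoped ComplexStarModule Unitization

lemma im_eq_zero_of_isSelfAdjoint (φ : A →L[ℂ] ℂ) (hφ : ∀ a : A, 0 ≤ a → 0 ≤ φ a)
    {s : A} (hs : IsSelfAdjoint s) : (φ s).im = 0 := by
  have h1 := hφ _ (CFC.posPart_nonneg s)
  have h2 := hφ _ (CFC.negPart_nonneg s)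
  rw [Complex.le_def] at h1 h2
  have hd : φ s = φ s⁺ - φ s⁻ := by rw [← map_sub, CFC.posPart_sub_negPart s hs]
  rw [hd, Complex.sub_im, ← h1.2, ← h2.2]
  simp

lemma map_star_eq_conj_map (φ : A →L[ℂ] ℂ) (hφ : ∀ a : A, 0 ≤ a → 0 ≤ φ a) (x : A) :
    φ (star x) = (starRingEnd ℂ) (φ x) := by
  have hre := im_eq_zero_of_isSelfAdjoint φ hφ (ℜ x).2
  have him := im_eq_zero_of_isSelfAdjoint φ hφ (ℑ x).2
  have hx : (ℜ x : A) + Complex.I • (ℑ x : A) = x := realPart_add_I_smul_imaginaryPart x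
  have hsx : (ℜ x : A) - Complex.I • (ℑ x : A) = star x := by
    conv_rhs => rw [← hx]
    rw [star_add, star_smul, (ℜ x).2.star_eq, (ℑ x).2.star_eq]
    simp [Complex.conj_I, sub_eq_add_neg]
  have e1 : φ x = φ (ℜ x : A) + Complex.I * φ (ℑ x : A) := by
    conv_lhs => rw [← hx]; rw [map_add, map_smul, smul_eq_mul]
  have e2 : φ (star x) = φ (ℜ x : A) - Complex.I * φ (ℑ x : A) := by
    rw [← hsx, map_sub, map_smul, smul_eq_mul]
  rw [e1, e2, map_add, map_mul, Complex.conj_I,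
    Complex.conj_eq_iff_im.mpr hre, Complex.conj_eq_iff_im.mpr him]
  ring

/-- The pre-inner-product space structure induced by a positive functional. -/
def coreOfPositive (φ : A →L[ℂ] ℂ) (hφ : ∀ a : A, 0 ≤ a → 0 ≤ φ a) :
    PreInnerProductSpace.Core ℂ A where
  inner x y := φ (star x * y)
  conj_inner_symm x y := by
    show (starRingEnd ℂ) (φ (star y * x)) = φ (star x * y)
    rw [← map_star_eq_conj_map φ hφ, star_mul, star_star]
  re_inner_nonneg x := by
    have := hφ _ (star_mul_self_nonneg x)
    rw [Complex.le_def] at this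
    simpa using this.1
  add_left x y z := by
    show φ (star (x + y) * z) = φ (star x * z) + φ (star y * z)
    rw [star_add, add_mul, map_add]
  smul_left x y r := by
    show φ (star (r • x) * y) = (starRingEnd ℂ) r * φ (star x * y)
    rw [star_smul, smul_mul_assoc, map_smul, smul_eq_mul]
    rfl

lemma cauchy_schwarz_positive (φ : A →L[ℂ] ℂ) (hφ : ∀ a : A, 0 ≤ a → 0 ≤ φ a) (x y : A) :
    ‖φ (star x * y)‖ ^ 2 ≤ (φ (star x * x)).re * (φ (star y * y)).re := by
  letI c := coreOfPositive φ hφ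
  letI : Inner ℂ A := c.toInner
  have h := InnerProductSpace.Core.inner_mul_inner_self_le (𝕜 := ℂ) (F := A) x y
  have hsym : (inner ℂ y x : ℂ) = (starRingEnd ℂ) (inner ℂ x y : ℂ) := (c.conj_inner_symm y x).symm
  rw [hsym, RCLike.norm_conj] at h
  rw [sq]; exact h

lemma mul_self_le_self_of_norm_le_one {x : A} (hx : 0 ≤ x) (hx1 : ‖x‖ ≤ 1) : x * x ≤ x := by
  have hxsa : IsSelfAdjoint x := hx.isSelfAdjoint
  have hmsa : IsSelfAdjoint (x * x) := by rw [IsSelfAdjoint, star_mul, hxsa.star_eq]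
  rw [← Unitization.inr_le_iff _ _ hmsa hxsa, Unitization.inr_mul]
  have ha0 : 0 ≤ (x : Unitization ℂ A) := Unitization.inr_nonneg_iff.mpr hx
  have ha1 : (x : Unitization ℂ A) ≤ 1 :=
    (CStarAlgebra.norm_le_one_iff_of_nonneg _ ha0).mp (by rwa [Unitization.norm_inr])
  have h2 := CStarAlgebra.pow_antitone ha0 ha1 (one_le_two)
  simpa [pow_two] using h2

/-- If there is an approximate identity along which `L` tends to `0`, then any state `φ`
is infinitely `d_L`-distant from any positive functional `ψ` of norm `< 1` (i.e. from the
restriction to `A` of any state of the multiplier algebra that is not strictly continuous). -/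
theorem dL_eq_top_of_norm_lt_one (L : selfAdjoint A → ℝ≥0∞) (hL : IsESeminorm L)
    {ι : Type*} [Preorder ι] [Nonempty ι] [IsDirected ι (· ≤ ·)]
    (I : ι → selfAdjoint A) (hI : IsApproxUnit fun n => (I n : A))
    (hLI : Tendsto (fun n => L (I n)) atTop (𝓝 0))
    (φ ψ : A →L[ℂ] ℂ) (hφ : IsState φ)
    (hψpos : ∀ a : A, 0 ≤ a → 0 ≤ ψ a) (hψnorm : ‖ψ‖ < 1) :
    dL L ⇑φ ⇑ψ = ⊤ := by
  haveI : (atTop : Filter ι).NeBot := atTop_neBot_iff.mpr ⟨‹_›, ⟨fun x y => directed_of (· ≤ ·) x y⟩⟩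
  obtain ⟨hφpos, hφnorm⟩ := hφ
  obtain ⟨hIpos, hInorm, hIconv⟩ := hI
  set r : ℝ := ‖ψ‖ with hr
  have hr0 : 0 ≤ r := norm_nonneg ψ
  set δ : ℝ := (1 - r) / 2 with hδdef
  have hδ : 0 < δ := by rw [hδdef]; linarith
  set c : ℝ := r + δ with hcdef
  have hc1 : c < 1 := by rw [hcdef, hδdef]; linarith
  have hc0 : 0 ≤ c := by rw [hcdef]; linarith
  -- find a unit-ball element almost attaining the norm of φ
  obtain ⟨a, ha1, ha2⟩ : ∃ a : A, ‖a‖ ≤ 1 ∧ c < ‖φ a‖ ^ 2 := by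
    set s : ℝ := (1 + c) / 2 with hsdef
    have hs0 : 0 ≤ s := by rw [hsdef]; linarith
    obtain ⟨x, hx⟩ : ∃ x : A, s * ‖x‖ < ‖φ x‖ := by
      by_contra h
      push_neg at h
      have := φ.opNorm_le_bound hs0 h
      rw [hφnorm] at this
      rw [hsdef] at this
      linarith
    have hx0 : x ≠ 0 := by
      rintro rfl
      simp at hx
    have hxn : 0 < ‖x‖ := norm_pos_iff.mpr hx0
    refine ⟨‖x‖⁻¹ • x, ?_, ?_⟩
    · rw [norm_smul, norm_inv, norm_norm, inv_mul_cancel₀ hxn.ne']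
    · have hsmul : φ (‖x‖⁻¹ • x) = ‖x‖⁻¹ • φ x := φ.map_smul_of_tower _ x
      rw [hsmul, norm_smul, norm_inv, norm_norm]
      have hgt : s < ‖x‖⁻¹ * ‖φ x‖ := by
        rw [← div_eq_inv_mul, lt_div_iff₀ hxn]; exact hx
      have hseq : s = (1 + c) / 2 := hsdef
      nlinarith [sq_nonneg (‖x‖⁻¹ * ‖φ x‖ - 1)]
  -- φ (I n * a) → φ a
  have h1 : Tendsto (fun n => φ ((I n : A) * a)) atTop (𝓝 (φ a)) := by
    have h0 : Tendsto (fun n => (I n : A) * a) atTop (𝓝 a) :=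
      tendsto_iff_norm_sub_tendsto_zero.mpr (hIconv a).1
    exact (φ.continuous.tendsto a).comp h0
  have h3 : ∀ᶠ n in atTop, c < ‖φ ((I n : A) * a)‖ ^ 2 :=
    (h1.norm.pow 2).eventually_const_lt ha2
  -- from Cauchy-Schwarz: eventually c < (φ (I n)).re
  have h4 : ∀ᶠ n in atTop, c < (φ (I n : A)).re := by
    refine h3.mono fun n hn => ?_
    have hsa : star (I n : A) = (I n : A) := (I n).2.star_eq
    have hcs := cauchy_schwarz_positive φ hφpos (I n : A) a
    rw [hsa] at hcs
    have hb2 : (φ (star a * a)).re ≤ 1 := by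
      refine le_trans ((Complex.re_le_norm _)) ?_
      calc ‖φ (star a * a)‖ ≤ ‖φ‖ * ‖star a * a‖ := φ.le_opNorm _
        _ = 1 * (‖a‖ * ‖a‖) := by rw [hφnorm, CStarRing.norm_star_mul_self]
        _ ≤ 1 := by nlinarith [norm_nonneg a]
    have hb1 : (φ ((I n : A) * (I n : A))).re ≤ (φ (I n : A)).re := by
      have hmono := hφpos _ (sub_nonneg.mpr (mul_self_le_self_of_norm_le_one (hIpos n) (hInorm n)))
      rw [map_sub, Complex.le_def] at hmono
      have := hmono.1
      rw [Complex.sub_re] at this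
      simpa using sub_nonneg.mp (by simpa using this)
    have hnn : 0 ≤ (φ ((I n : A) * (I n : A))).re := by
      have hpos0 := star_mul_self_nonneg (I n : A)
      rw [hsa] at hpos0
      have := hφpos _ hpos0
      rw [Complex.le_def] at this
      simpa using this.1
    calc c < ‖φ ((I n : A) * a)‖ ^ 2 := hn
      _ ≤ (φ ((I n : A) * (I n : A))).re * (φ (star a * a)).re := hcs
      _ ≤ (φ (I n : A)).re * 1 := by
          refine mul_le_mul hb1 hb2 ?_ (hnn.trans hb1)
          have := hφpos _ (star_mul_self_nonneg a)
          rw [Complex.le_def] at this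
          simpa using this.1
      _ = (φ (I n : A)).re := mul_one _
  -- eventually δ ≤ |φ (I n) - ψ (I n)|
  have h5 : ∀ᶠ n in atTop, δ ≤ ‖φ (I n : A) - ψ (I n : A)‖ := by
    refine h4.mono fun n hn => ?_
    have hψre : (ψ (I n : A)).re ≤ r := by
      refine le_trans ((Complex.re_le_norm _)) ?_
      calc ‖ψ (I n : A)‖ ≤ ‖ψ‖ * ‖(I n : A)‖ := ψ.le_opNorm _
        _ ≤ r * 1 := by rw [← hr]; exact mul_le_mul_of_nonneg_left (hInorm n) hr0
        _ = r := mul_one r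
    calc δ = c - r := by rw [hcdef]; ring
      _ ≤ (φ (I n : A)).re - (ψ (I n : A)).re := by linarith
      _ = (φ (I n : A) - ψ (I n : A)).re := (Complex.sub_re _ _).symm
      _ ≤ ‖φ (I n : A) - ψ (I n : A)‖ :=
          (Complex.re_le_norm _)
  -- conclude
  refine ENNReal.eq_top_of_forall_nnreal_le fun M => ?_
  set δ' : ℝ≥0 := ⟨δ, hδ.le⟩ with hδ'def
  have hδ'0 : δ' ≠ 0 := by
    simp only [← NNReal.coe_ne_zero, hδ'def]
    exact fun h => hδ.ne' (congrArg Subtype.val h)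
  set T : ℝ≥0 := (M + 1) / δ' with hTdef
  have hT0 : T ≠ 0 := by
    rw [hTdef]
    exact div_ne_zero (by simp) hδ'0
  have hTpos : (0 : ℝ≥0∞) < (T : ℝ≥0∞)⁻¹ := ENNReal.inv_pos.mpr ENNReal.coe_ne_top
  have hLev : ∀ᶠ n in atTop, L (I n) < (T : ℝ≥0∞)⁻¹ := hLI.eventually_lt_const hTpos
  obtain ⟨n, hn1, hn2⟩ := (hLev.and h5).exists
  set b : selfAdjoint A := (T : ℝ) • I n with hbdef
  have hLb : L b ≤ 1 := by
    rw [hbdef, hL.1]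
    have hTn : ‖(T : ℝ)‖₊ = T := by
      ext
      simp [Real.norm_of_nonneg T.coe_nonneg]
    rw [hTn]
    calc (T : ℝ≥0∞) * L (I n) ≤ (T : ℝ≥0∞) * (T : ℝ≥0∞)⁻¹ := mul_le_mul_right hn1.le _
      _ = 1 := ENNReal.mul_inv_cancel (by exact_mod_cast hT0) ENNReal.coe_ne_top
  refine le_trans ?_ (le_iSup (fun b : {b : selfAdjoint A // L b ≤ 1} =>
    (‖φ (b.1 : A) - ψ (b.1 : A)‖₊ : ℝ≥0∞)) ⟨b, hLb⟩)
  have hbc : (b : A) = (T : ℝ) • (I n : A) := rfl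
  have hval : φ (b : A) - ψ (b : A) = (T : ℝ) • (φ (I n : A) - ψ (I n : A)) := by
    rw [hbc, φ.map_smul_of_tower, ψ.map_smul_of_tower, smul_sub]
  rw [ENNReal.coe_le_coe]
  rw [hval, nnnorm_smul]
  have hTn : ‖(T : ℝ)‖₊ = T := by
    ext
    simp [Real.norm_of_nonneg T.coe_nonneg]
  rw [hTn]
  have hδ'le : δ' ≤ ‖φ (I n : A) - ψ (I n : A)‖₊ := by
    rw [← NNReal.coe_le_coe]
    exact hn2
  calc M ≤ M + 1 := le_self_add
    _ = T * δ' := by rw [hTdef, div_mul_cancel₀ _ hδ'0]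
    _ ≤ T * ‖φ (I n : A) - ψ (I n : A)‖₊ := mul_le_mul_right hδ'le T
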